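/- Let k ≥ 2 and T ≥ 0 be integers, let m ∈ [0,1], let V ≥ 0, and let a₀, a₁, …, a_T be real numbers with a₀ ≥ 0 and, for every integer 1 ≤ i ≤ T, aᵢ ≥ (1 − 2/k)·a_{i−1} + (1/(2k))·(1 + m + (1 − m)(1 − 2/k)^{i−1})·V. Then for every integer 0 ≤ i ≤ T, aᵢ ≥ [((1 + m)/4)·(1 − (1 − 2/k)^i) + ((1 − m)·i/(2k))·(1 − 2/k)^{i−1}]·V. -/

import Mathlib

/-- the Random Greedy for Matroids recursion. If `a₀ ≥ 0` and
`aᵢ ≥ (1 − 2/k)·a_{i−1} + (1/(2k))·(1 + m + (1 − m)(1 − 2/k)^{i−1})·V` for `1 ≤ i ≤ T`,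
then `aᵢ ≥ [((1+m)/4)(1 − (1−2/k)^i) + ((1−m)i/(2k))(1−2/k)^{i−1}]·V` for `0 ≤ i ≤ T`. -/
theorem stmt15 (k T : ℕ) (hk : 2 ≤ k)
    (m V : ℝ) (hm : m ∈ Set.Icc (0 : ℝ) 1) (hV : 0 ≤ V)
    (a : ℕ → ℝ) (ha0 : 0 ≤ a 0)
    (hrec : ∀ i : ℕ, 1 ≤ i → i ≤ T →
      (1 - 2 / (k : ℝ)) * a (i - 1)
        + (1 / (2 * (k : ℝ))) * (1 + m + (1 - m) * (1 - 2 / (k : ℝ)) ^ (i - 1)) * V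
        ≤ a i) :
    ∀ i : ℕ, i ≤ T →
      (((1 + m) / 4) * (1 - (1 - 2 / (k : ℝ)) ^ i)
          + ((1 - m) * (i : ℝ) / (2 * (k : ℝ))) * (1 - 2 / (k : ℝ)) ^ (i - 1)) * V
        ≤ a i := by
  have hk' : (2 : ℝ) ≤ (k : ℝ) := by exact_mod_cast hk
  have hk0 : (k : ℝ) ≠ 0 := by positivity
  have hq : 0 ≤ 1 - 2 / (k : ℝ) := by
    rw [sub_nonneg, div_le_one (by positivity)]; exact hk'
  intro i
  induction i with
  | zero =>
    intro _
    simpa using ha0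
  | succ i ih =>
    intro hle
    have h1 := ih (Nat.le_of_succ_le hle)
    have h2 := hrec (i + 1) (Nat.le_add_left 1 i) hle
    simp only [Nat.add_sub_cancel] at h2
    have key : (((1 + m) / 4) * (1 - (1 - 2 / (k : ℝ)) ^ (i + 1))
          + ((1 - m) * ((i + 1 : ℕ) : ℝ) / (2 * (k : ℝ))) * (1 - 2 / (k : ℝ)) ^ ((i + 1) - 1))
        = (1 - 2 / (k : ℝ)) * (((1 + m) / 4) * (1 - (1 - 2 / (k : ℝ)) ^ i)
          + ((1 - m) * (i : ℝ) / (2 * (k : ℝ))) * (1 - 2 / (k : ℝ)) ^ (i - 1))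
          + (1 / (2 * (k : ℝ))) * (1 + m + (1 - m) * (1 - 2 / (k : ℝ)) ^ i) := by
      cases i with
      | zero => norm_num; field_simp; ring
      | succ j =>
        simp only [Nat.add_sub_cancel]
        push_cast
        simp only [one_sub_div hk0, div_pow]
        field_simp
        ring
    rw [key, add_mul]
    have h3 : (1 - 2 / (k : ℝ)) * ((((1 + m) / 4) * (1 - (1 - 2 / (k : ℝ)) ^ i)
          + ((1 - m) * (i : ℝ) / (2 * (k : ℝ))) * (1 - 2 / (k : ℝ)) ^ (i - 1)) * V)
        ≤ (1 - 2 / (k : ℝ)) * a i := mul_le_mul_of_nonneg_left h1 hq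
    nlinarith [h3, h2]
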